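/- arXiv:1306.2048 — 2 statements merged into one kernel-verified Lean document; each statement's English description precedes it below -/
import Mathlib

section
/- Let X = (X_1,…,X_m) and Z = (Z_1,…,Z_m) be random vectors in ℝ^m, and let f : ℝ^m → ℂ be three times differentiable with all third-order partial derivatives bounded: |∂³_{uvw} f(x)| ≤ L₃ for all x and all u, v, w. For each k let B_k ⊆ {1,…,k−1}, let B_k^c = {1,…,k−1}∖B_k, and define U_{k−1} = (U_1,…,U_{k−1}) by U_i = 0 if i ∈ B_k and U_i = X_i if i ∈ B_k^c. Then f(X) − f(Z) = R₁ + R₂ + R₃, where R₁ = Σ_{k=1}^m (X_k − Z_k) · ∂_k f(X_1,…,X_{k−1}, 0, Z_{k+1},…,Z_m), R₂ = (1/2) Σ_{k=1}^m (X_k² − Z_k²) · ∂²_k f(U_{k−1}, 0, Z_{k+1},…,Z_m), and |R₃| ≤ L₃ Σ_{k=1}^m (X_k² + Z_k²) Σ_{u∈B_k} |X_u| + L₃ Σ_{k=1}^m |X_k|³ + L₃ Σ_{k=1}^m |Z_k|³. -/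
open MeasureTheory ProbabilityTheory Filter Matrix
open scoped NNReal ENNReal

noncomputable section

namespace RMT

/-- Strict lexicographic order `p <lex q` on `ℤ × ℤ`. -/
def lexLT (p q : ℤ × ℤ) : Prop := p.1 < q.1 ∨ (p.1 = q.1 ∧ p.2 < q.2)

/-- Lexicographic order `p ≤lex q` on `ℤ × ℤ`. -/
def lexLE (p q : ℤ × ℤ) : Prop := p.1 < q.1 ∨ (p.1 = q.1 ∧ p.2 ≤ q.2)

/-- The index set `B^a_{ij}`. -/
def Bset (a : ℕ) (i j : ℤ) : Set (ℤ × ℤ) :=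
  {q | (a : ℤ) ≤ max |q.1 - i| |q.2 - j| ∧ lexLE q (i, j)}

variable {Ω : Type*} [MeasurableSpace Ω]

/-- σ-algebra generated by a family of real random variables indexed by a set. -/
def sigmaOn {ι : Type*} (Z : ι → Ω → ℝ) (S : Set ι) : MeasurableSpace Ω :=
  ⨆ i ∈ S, MeasurableSpace.comap (Z i) inferInstance

/-- `F^a_{ij}` : the σ-algebra generated by `X_{uv}`, `(u,v) ∈ B^a_{ij}`, `v ≤ u`. -/
def sigmaF (X : ℤ × ℤ → Ω → ℝ) (a : ℕ) (i j : ℤ) : MeasurableSpace Ω :=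
  sigmaOn X {q : ℤ × ℤ | q ∈ Bset a i j ∧ q.2 ≤ q.1}

/-- The symmetric `n × n` matrix built from entries `x (i,j)`, `1 ≤ j ≤ i ≤ n`. -/
def symMat (n : ℕ) (x : ℕ × ℕ → ℝ) : Matrix (Fin n) (Fin n) ℝ :=
  Matrix.of fun i j =>
    if (j : ℕ) ≤ (i : ℕ) then x ((i : ℕ) + 1, (j : ℕ) + 1) else x ((j : ℕ) + 1, (i : ℕ) + 1)

/-- `𝕏_n = n^{-1/2} X_n`. -/
def scaledMat (n : ℕ) (x : ℕ × ℕ → ℝ) : Matrix (Fin n) (Fin n) ℝ :=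
  (Real.sqrt n)⁻¹ • symMat n x

/-- Stieltjes transform of the empirical spectral distribution of a real matrix. -/
def stMat {n : ℕ} (A : Matrix (Fin n) (Fin n) ℝ) (z : ℂ) : ℂ :=
  (n : ℂ)⁻¹ * Matrix.trace ((A.map (fun t => (t : ℂ)) - z • (1 : Matrix (Fin n) (Fin n) ℂ))⁻¹)

/-- Empirical spectral distribution function of a (symmetric) real matrix. -/
def esd {n : ℕ} (A : Matrix (Fin n) (Fin n) ℝ) (t : ℝ) : ℝ :=
  if h : A.IsHermitian then (n : ℝ)⁻¹ * (Nat.card {k : Fin n // h.eigenvalues k ≤ t}) else 0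

/-- Lévy distance between two distribution functions. -/
def levyDist (F G : ℝ → ℝ) : ℝ :=
  sInf {ε : ℝ | 0 < ε ∧ ∀ x : ℝ, F (x - ε) - ε ≤ G x ∧ G x ≤ F (x + ε) + ε}

/-- The standard semicircle distribution function. -/
def semicircleCDF (x : ℝ) : ℝ :=
  ∫ t in Set.Iic x, (if |t| ≤ 2 then Real.sqrt (4 - t ^ 2) / (2 * Real.pi) else 0)

/-- The standard Marchenko–Pastur distribution function with ratio `y`. -/
def mpCDF (y : ℝ) (x : ℝ) : ℝ :=
  (if 1 < y ∧ 0 ≤ x then 1 - 1 / y else 0) +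
    ∫ t in Set.Iic x,
      (if (1 - Real.sqrt y) ^ 2 ≤ t ∧ t ≤ (1 + Real.sqrt y) ^ 2 then
        Real.sqrt (((1 + Real.sqrt y) ^ 2 - t) * (t - (1 - Real.sqrt y) ^ 2)) /
          (2 * Real.pi * t * y)
      else 0)

/-- `p × n` data matrix with entries `x (i,j)`, `1 ≤ i ≤ p`, `1 ≤ j ≤ n`. -/
def dataMat (p n : ℕ) (x : ℕ × ℕ → ℝ) : Matrix (Fin p) (Fin n) ℝ :=
  Matrix.of fun i j => x ((i : ℕ) + 1, (j : ℕ) + 1)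

/-- Sample covariance matrix `X Xᵀ / n`. -/
def covMat (p n : ℕ) (x : ℕ × ℕ → ℝ) : Matrix (Fin p) (Fin p) ℝ :=
  (n : ℝ)⁻¹ • (dataMat p n x * (dataMat p n x)ᵀ)


/-- Partial derivative of `f : ℝ^m → ℂ` in the `k`-th coordinate. -/
def pd {m : ℕ} (f : (Fin m → ℝ) → ℂ) (k : Fin m) : (Fin m → ℝ) → ℂ :=
  fun x => fderiv ℝ f x (Pi.single k 1)


section AuxLemmas
variable {m : ℕ}

lemma contDiff_pd {n : ℕ∞} {F : (Fin m → ℝ) → ℂ} (hF : ContDiff ℝ (n+1) F) (k : Fin m) :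
    ContDiff ℝ n (pd F k) :=
  (hF.fderiv_right le_rfl).clm_apply contDiff_const

lemma hasDerivAt_line {F : (Fin m → ℝ) → ℂ} (hF : Differentiable ℝ F) (c : Fin m → ℝ)
    (k : Fin m) (t : ℝ) :
    HasDerivAt (fun s : ℝ => F (c + s • (Pi.single k 1 : Fin m → ℝ))) (pd F k (c + t • (Pi.single k 1 : Fin m → ℝ))) t := by
  have h1 : HasDerivAt (fun s : ℝ => c + s • (Pi.single k 1 : Fin m → ℝ))
      (Pi.single k 1 : Fin m → ℝ) t := by
    simpa using ((hasDerivAt_id t).smul_const (Pi.single k 1 : Fin m → ℝ)).const_add c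
  exact (hF _).hasFDerivAt.comp_hasDerivAt t h1

lemma mvt_coord {G : (Fin m → ℝ) → ℂ} (hG : Differentiable ℝ G) {L : ℝ} (u : Fin m)
    (hL : ∀ x, ‖pd G u x‖ ≤ L) (c : Fin m → ℝ) (a b : ℝ) :
    ‖G (c + a • (Pi.single u 1 : Fin m → ℝ)) - G (c + b • (Pi.single u 1 : Fin m → ℝ))‖ ≤ L * |a - b| := by
  have := Convex.norm_image_sub_le_of_norm_hasDerivWithin_le
    (f := fun s : ℝ => G (c + s • (Pi.single u 1 : Fin m → ℝ)))
    (f' := fun s : ℝ => pd G u (c + s • (Pi.single u 1 : Fin m → ℝ))) (s := Set.univ) (C := L)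
    (fun x _ => (hasDerivAt_line hG c u x).hasDerivWithinAt)
    (fun x _ => hL _) convex_univ (Set.mem_univ b) (Set.mem_univ a)
  simpa [Real.norm_eq_abs] using this

lemma zero_coords {G : (Fin m → ℝ) → ℂ} (hG : Differentiable ℝ G) {L : ℝ}
    (hL : ∀ (x : Fin m → ℝ) (u : Fin m), ‖pd G u x‖ ≤ L) (hL0 : 0 ≤ L)
    (c : Fin m → ℝ) (S : Finset (Fin m)) :
    ‖G (fun i => if i ∈ S then 0 else c i) - G c‖ ≤ L * ∑ u ∈ S, |c u| := by
  induction S using Finset.induction_on with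
  | empty => simp
  | @insert a S' ha ih =>
    have hc' : (fun i => if i ∈ insert a S' then 0 else c i)
        = (fun i => if i ∈ S' then 0 else c i) + (0 - c a) • (Pi.single a 1 : Fin m → ℝ) := by
      funext i
      by_cases hia : i = a
      · subst hia
        simp [ha, Pi.single_apply]
      · simp [Pi.single_apply, hia, Finset.mem_insert]
    have h0 : (fun i => if i ∈ S' then 0 else c i)
        = (fun i => if i ∈ S' then 0 else c i) + (0 : ℝ) • (Pi.single a 1 : Fin m → ℝ) := by
      simp
    have key : ‖G (fun i => if i ∈ insert a S' then 0 else c i)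
        - G (fun i => if i ∈ S' then 0 else c i)‖ ≤ L * |c a| := by
      rw [hc', h0]
      have := mvt_coord hG a (fun x => hL x a) (fun i => if i ∈ S' then 0 else c i) (0 - c a) 0
      simpa using this
    calc ‖G (fun i => if i ∈ insert a S' then 0 else c i) - G c‖
        ≤ ‖G (fun i => if i ∈ insert a S' then 0 else c i)
            - G (fun i => if i ∈ S' then 0 else c i)‖
          + ‖G (fun i => if i ∈ S' then 0 else c i) - G c‖ := by
          rw [← sub_add_sub_cancel (G (fun i => if i ∈ insert a S' then 0 else c i))
            (G (fun i => if i ∈ S' then 0 else c i)) (G c)]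
          exact norm_add_le _ _
      _ ≤ L * |c a| + L * ∑ u ∈ S', |c u| := add_le_add key ih
      _ = L * ∑ u ∈ insert a S', |c u| := by rw [Finset.sum_insert ha]; ring
lemma taylor2 {f : (Fin m → ℝ) → ℂ} {L : ℝ} (hf : ContDiff ℝ 3 f) (k : Fin m)
    (hL : ∀ x, ‖pd (pd (pd f k) k) k x‖ ≤ L) (c : Fin m → ℝ) (t : ℝ) :
    ‖f (c + t • (Pi.single k 1 : Fin m → ℝ)) - f c - t • pd f k c
      - (t ^ 2 / 2) • pd (pd f k) k c‖ ≤ L * |t| ^ 3 := by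
  set e : Fin m → ℝ := Pi.single k 1 with he
  have hL0 : 0 ≤ L := le_trans (norm_nonneg _) (hL c)
  have hf1 : ContDiff ℝ 2 (pd f k) := contDiff_pd (n := 2) (hf.of_le (by norm_num)) k
  have hf2 : ContDiff ℝ 1 (pd (pd f k) k) :=
    contDiff_pd (n := 1) (hf1.of_le (by norm_num)) k
  have hd0 : Differentiable ℝ f := hf.differentiable (by norm_num)
  have hd1 : Differentiable ℝ (pd f k) := hf1.differentiable (by norm_num)
  have hd2 : Differentiable ℝ (pd (pd f k) k) := hf2.differentiable (by norm_num)
  set g : ℝ → ℂ := fun s => f (c + s • e) with hg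
  set g1 : ℝ → ℂ := fun s => pd f k (c + s • e) with hg1
  set g2 : ℝ → ℂ := fun s => pd (pd f k) k (c + s • e) with hg2
  have Hg : ∀ s, HasDerivAt g (g1 s) s := fun s => hasDerivAt_line hd0 c k s
  have Hg1 : ∀ s, HasDerivAt g1 (g2 s) s := fun s => hasDerivAt_line hd1 c k s
  have Hg2 : ∀ s, HasDerivAt g2 (pd (pd (pd f k) k) k (c + s • e)) s :=
    fun s => hasDerivAt_line hd2 c k s
  -- step 1 : ‖g2 s - g2 0‖ ≤ L * |s|
  have step1 : ∀ s : ℝ, ‖g2 s - g2 0‖ ≤ L * |s| := by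
    intro s
    have := Convex.norm_image_sub_le_of_norm_hasDerivWithin_le
      (f := g2) (f' := fun s => pd (pd (pd f k) k) k (c + s • e)) (s := Set.univ) (C := L)
      (fun x _ => (Hg2 x).hasDerivWithinAt) (fun x _ => hL _) convex_univ
      (Set.mem_univ 0) (Set.mem_univ s)
    simpa [Real.norm_eq_abs] using this
  -- step 2 : h1 s := g1 s - g1 0 - s • g2 0 ; ‖h1 s‖ ≤ L * s^2
  set h1 : ℝ → ℂ := fun s => g1 s - g1 0 - s • g2 0 with hh1
  have Hh1 : ∀ s, HasDerivAt h1 (g2 s - g2 0) s := by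
    intro s
    have hs : HasDerivAt (fun s : ℝ => s • g2 0) ((1:ℝ) • g2 0) s :=
      (hasDerivAt_id s).smul_const (g2 0)
    exact (((Hg1 s).sub_const (g1 0)).sub hs).congr_deriv (by simp)
  have step2 : ∀ t : ℝ, ‖h1 t‖ ≤ L * t ^ 2 := by
    intro t
    have bound : ∀ s ∈ Set.uIcc (0:ℝ) t, ‖g2 s - g2 0‖ ≤ L * |t| := by
      intro s hs
      refine le_trans (step1 s) (mul_le_mul_of_nonneg_left ?_ hL0)
      rcases Set.mem_uIcc.1 hs with ⟨h1, h2⟩ | ⟨h1, h2⟩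
      · rw [abs_le]; constructor <;> [linarith [abs_nonneg t, le_abs_self t, neg_abs_le t]; skip]
        exact le_trans h2 (le_abs_self t)
      · rw [abs_le]
        exact ⟨le_trans (neg_abs_le t) h1, le_trans h2 (by positivity)⟩
    have := Convex.norm_image_sub_le_of_norm_hasDerivWithin_le
      (f := h1) (f' := fun s => g2 s - g2 0) (s := Set.uIcc (0:ℝ) t) (C := L * |t|)
      (fun x hx => (Hh1 x).hasDerivWithinAt) bound (convex_uIcc (0:ℝ) t)
      Set.left_mem_uIcc Set.right_mem_uIcc
    have h10 : h1 0 = 0 := by simp [hh1]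
    calc ‖h1 t‖ = ‖h1 t - h1 0‖ := by rw [h10, sub_zero]
      _ ≤ L * |t| * ‖t - (0:ℝ)‖ := this
      _ = L * t ^ 2 := by
          rw [sub_zero, Real.norm_eq_abs, mul_assoc, abs_mul_abs_self]; ring
  -- step 3
  set h : ℝ → ℂ := fun s => g s - g 0 - s • g1 0 - (s ^ 2 / 2) • g2 0 with hh
  have Hh : ∀ s, HasDerivAt h (h1 s) s := by
    intro s
    have hA : HasDerivAt (fun s : ℝ => s • g1 0) ((1:ℝ) • g1 0) s :=
      (hasDerivAt_id s).smul_const (g1 0)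
    have hp : HasDerivAt (fun s : ℝ => s ^ 2 / 2) s s := by
      simpa using (hasDerivAt_pow 2 s).div_const 2
    have hB : HasDerivAt (fun s : ℝ => (s ^ 2 / 2) • g2 0) (s • g2 0) s :=
      hp.smul_const (g2 0)
    exact ((((Hg s).sub_const (g 0)).sub hA).sub hB).congr_deriv (by simp only [one_smul, hh1])
  have habs : ∀ s ∈ Set.uIcc (0:ℝ) t, |s| ≤ |t| := by
    intro s hs
    rcases Set.mem_uIcc.1 hs with ⟨ha, hb⟩ | ⟨ha, hb⟩
    · rw [abs_le]
      exact ⟨by linarith [neg_abs_le t, abs_nonneg t], le_trans hb (le_abs_self t)⟩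
    · rw [abs_le]
      exact ⟨le_trans (neg_abs_le t) ha, le_trans hb (by positivity)⟩
  have bound : ∀ s ∈ Set.uIcc (0:ℝ) t, ‖h1 s‖ ≤ L * t ^ 2 := by
    intro s hs
    refine le_trans (step2 s) (mul_le_mul_of_nonneg_left ?_ hL0)
    rw [← sq_abs s, ← sq_abs t]
    exact pow_le_pow_left₀ (abs_nonneg s) (habs s hs) 2
  have main := Convex.norm_image_sub_le_of_norm_hasDerivWithin_le
    (f := h) (f' := h1) (s := Set.uIcc (0:ℝ) t) (C := L * t ^ 2)
    (fun x hx => (Hh x).hasDerivWithinAt) bound (convex_uIcc (0:ℝ) t)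
    Set.left_mem_uIcc Set.right_mem_uIcc
  have h0 : h 0 = 0 := by simp [hh]
  have hfin : ‖h t‖ ≤ L * |t| ^ 3 := by
    calc ‖h t‖ = ‖h t - h 0‖ := by rw [h0, sub_zero]
      _ ≤ L * t ^ 2 * ‖t - (0:ℝ)‖ := main
      _ = L * |t| ^ 3 := by
          rw [sub_zero, Real.norm_eq_abs, ← sq_abs t]; ring
  have hexp : h t = f (c + t • e) - f c - t • pd f k c - (t ^ 2 / 2) • pd (pd f k) k c := by
    simp [hh, hg, hg1, hg2]
  rw [← hexp]
  exact hfin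

/-- Second order Taylor error term along coordinate `k`. -/
def tErr {m : ℕ} (f : (Fin m → ℝ) → ℂ) (k : Fin m) (c : Fin m → ℝ) (t : ℝ) : ℂ :=
  f (c + t • (Pi.single k 1 : Fin m → ℝ)) - f c - t • pd f k c
    - (t ^ 2 / 2) • pd (pd f k) k c

lemma tErr_bound {f : (Fin m → ℝ) → ℂ} {L : ℝ} (hf : ContDiff ℝ 3 f) (k : Fin m)
    (hL : ∀ x, ‖pd (pd (pd f k) k) k x‖ ≤ L) (c : Fin m → ℝ) (t : ℝ) :
    ‖tErr f k c t‖ ≤ L * |t| ^ 3 := taylor2 hf k hL c t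

/-- The partially replaced vector. -/
def Yv {m : ℕ} (x z : Fin m → ℝ) (k : Fin m) : Fin m → ℝ :=
  fun i => if i < k then x i else if i = k then 0 else z i

/-- The partially replaced vector with coordinates in `B k` zeroed out. -/
def Uv {m : ℕ} (x z : Fin m → ℝ) (B : Fin m → Finset (Fin m)) (k : Fin m) : Fin m → ℝ :=
  fun i => if i < k then (if i ∈ B k then 0 else x i) else if i = k then 0 else z i

end AuxLemmas

/-- Proposition (Lindeberg-type telescoping decomposition with partial replacement): for a
three times differentiable `f` with third-order partial derivatives bounded by `L₃`, and
random vectors `X`, `Z`, one has `f(X) - f(Z) = R₁ + R₂ + R₃` with the explicit first and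
second order terms `R₁`, `R₂` (evaluated at partially replaced vectors, with the
coordinates in `B_k` set to `0` in the second order term) and remainder `R₃` bounded by
`L₃ Σ_k (X_k² + Z_k²) Σ_{u ∈ B_k} |X_u| + L₃ Σ_k |X_k|³ + L₃ Σ_k |Z_k|³`. -/
theorem lindeberg_decomposition {m : ℕ}
    (f : (Fin m → ℝ) → ℂ) (L₃ : ℝ)
    (hf : ContDiff ℝ 3 f)
    (hL3 : ∀ (x : Fin m → ℝ) (u v w : Fin m), ‖pd (pd (pd f w) v) u x‖ ≤ L₃)
    (X Z : Ω → Fin m → ℝ)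
    (B : Fin m → Finset (Fin m)) (hB : ∀ k, ∀ i ∈ B k, i < k) :
    ∃ R₃ : Ω → ℂ, ∀ ω : Ω,
      (f (X ω) - f (Z ω) =
        (∑ k : Fin m, ((X ω k - Z ω k : ℝ) : ℂ) *
          pd f k (fun i => if i < k then X ω i else if i = k then 0 else Z ω i)) +
        (1 / 2 : ℂ) * (∑ k : Fin m, (((X ω k) ^ 2 - (Z ω k) ^ 2 : ℝ) : ℂ) *
          pd (pd f k) k (fun i =>
            if i < k then (if i ∈ B k then 0 else X ω i)
            else if i = k then 0 else Z ω i)) +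
        R₃ ω) ∧
      ‖R₃ ω‖ ≤
        L₃ * ∑ k : Fin m, ((X ω k) ^ 2 + (Z ω k) ^ 2) * (∑ u ∈ B k, |X ω u|) +
          L₃ * ∑ k : Fin m, |X ω k| ^ 3 + L₃ * ∑ k : Fin m, |Z ω k| ^ 3  := by
  classical
  refine ⟨fun ω => f (X ω) - f (Z ω) -
      (∑ k : Fin m, ((X ω k - Z ω k : ℝ) : ℂ) *
        pd f k (fun i => if i < k then X ω i else if i = k then 0 else Z ω i)) -
      (1 / 2 : ℂ) * (∑ k : Fin m, (((X ω k) ^ 2 - (Z ω k) ^ 2 : ℝ) : ℂ) *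
        pd (pd f k) k (fun i =>
          if i < k then (if i ∈ B k then 0 else X ω i)
          else if i = k then 0 else Z ω i)), fun ω => ⟨by ring, ?_⟩⟩
  simp only []
  set x : Fin m → ℝ := X ω with hxdef
  set z : Fin m → ℝ := Z ω with hzdef
  -- basic differentiability facts
  have hd0 : Differentiable ℝ f := hf.differentiable (by norm_num)
  have hD2 : ∀ k : Fin m, Differentiable ℝ (pd (pd f k) k) := by
    intro k
    have hf1 : ContDiff ℝ 2 (pd f k) := contDiff_pd (n := 2) (hf.of_le (by norm_num)) k
    have hf2 : ContDiff ℝ 1 (pd (pd f k) k) := contDiff_pd (n := 1) (hf1.of_le (by norm_num)) k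
    exact hf2.differentiable (by norm_num)
  -- telescoping identity
  have tel : f x - f z = ∑ k : Fin m,
      (f (Yv x z k + x k • (Pi.single k 1 : Fin m → ℝ))
        - f (Yv x z k + z k • (Pi.single k 1 : Fin m → ℝ))) := by
    have h1 : ∀ k : Fin m, Yv x z k + x k • (Pi.single k 1 : Fin m → ℝ)
        = fun i : Fin m => if (i : ℕ) < (k : ℕ) + 1 then x i else z i := by
      intro k; funext i
      simp only [Yv, Pi.add_apply, Pi.smul_apply, Pi.single_apply, smul_eq_mul]
      rcases lt_trichotomy i k with h | h | h
      · have hik : (i : ℕ) < (k : ℕ) := h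
        have : ¬ i = k := ne_of_lt h
        simp [h, this, Nat.lt_succ_of_lt hik]
      · subst h; simp
      · have hik : (k : ℕ) < (i : ℕ) := h
        have h2 : ¬ i < k := not_lt_of_gt h
        have h3 : ¬ i = k := (ne_of_gt h)
        have h4 : ¬ (i : ℕ) < (k : ℕ) + 1 := by omega
        simp [h2, h3, h4]
    have h2 : ∀ k : Fin m, Yv x z k + z k • (Pi.single k 1 : Fin m → ℝ)
        = fun i : Fin m => if (i : ℕ) < (k : ℕ) then x i else z i := by
      intro k; funext i
      simp only [Yv, Pi.add_apply, Pi.smul_apply, Pi.single_apply, smul_eq_mul]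
      rcases lt_trichotomy i k with h | h | h
      · have hik : (i : ℕ) < (k : ℕ) := h
        have : ¬ i = k := ne_of_lt h
        simp [h, this, hik]
      · subst h; simp
      · have hik : (k : ℕ) < (i : ℕ) := h
        have h2 : ¬ i < k := not_lt_of_gt h
        have h3 : ¬ i = k := (ne_of_gt h)
        have h4 : ¬ (i : ℕ) < (k : ℕ) := by omega
        simp [h2, h3, h4]
    set V : ℕ → ℂ := fun j => f (fun i : Fin m => if (i : ℕ) < j then x i else z i) with hV
    have hVm : V m = f x := by
      show f (fun i : Fin m => if (i : ℕ) < m then x i else z i) = f x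
      congr 1; funext i; simp [i.isLt]
    have hV0 : V 0 = f z := by
      show f (fun i : Fin m => if (i : ℕ) < 0 then x i else z i) = f z
      congr 1
    have hsub : ∑ j ∈ Finset.range m, (V (j + 1) - V j) = V m - V 0 :=
      Finset.sum_range_sub V m
    have hfin : ∑ k : Fin m, (V ((k : ℕ) + 1) - V (k : ℕ))
        = ∑ j ∈ Finset.range m, (V (j + 1) - V j) :=
      Fin.sum_univ_eq_sum_range (fun j => V (j + 1) - V j) m
    rw [← hVm, ← hV0, ← hsub, ← hfin]
    refine Finset.sum_congr rfl fun k _ => ?_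
    rw [h1 k, h2 k, hV]
  -- the representation of the remainder
  have rep : f x - f z -
      (∑ k : Fin m, ((x k - z k : ℝ) : ℂ) *
        pd f k (fun i => if i < k then x i else if i = k then 0 else z i)) -
      (1 / 2 : ℂ) * (∑ k : Fin m, (((x k) ^ 2 - (z k) ^ 2 : ℝ) : ℂ) *
        pd (pd f k) k (fun i =>
          if i < k then (if i ∈ B k then 0 else x i)
          else if i = k then 0 else z i)) =
      ∑ k : Fin m,
        ((((x k) ^ 2 - (z k) ^ 2) / 2) •
            (pd (pd f k) k (Yv x z k) - pd (pd f k) k (Uv x z B k)) +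
          (tErr f k (Yv x z k) (x k) - tErr f k (Yv x z k) (z k))) := by
    rw [tel, Finset.mul_sum, ← Finset.sum_sub_distrib, ← Finset.sum_sub_distrib]
    refine Finset.sum_congr rfl fun k _ => ?_
    have hYk : (fun i => if i < k then x i else if i = k then 0 else z i) = Yv x z k := rfl
    have hUk : (fun i => if i < k then (if i ∈ B k then 0 else x i)
        else if i = k then 0 else z i) = Uv x z B k := rfl
    rw [hYk, hUk]
    simp only [tErr, Complex.real_smul]
    push_cast
    ring
  rw [rep]
  -- bound each summand
  have keybound : ∀ k : Fin m,
      ‖(((x k) ^ 2 - (z k) ^ 2) / 2) •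
          (pd (pd f k) k (Yv x z k) - pd (pd f k) k (Uv x z B k)) +
        (tErr f k (Yv x z k) (x k) - tErr f k (Yv x z k) (z k))‖ ≤
      ((x k) ^ 2 + (z k) ^ 2) * (L₃ * ∑ u ∈ B k, |x u|) +
        (L₃ * |x k| ^ 3 + L₃ * |z k| ^ 3) := by
    intro k
    have hL0 : 0 ≤ L₃ := le_trans (norm_nonneg _) (hL3 x k k k)
    have hT1 : ‖tErr f k (Yv x z k) (x k)‖ ≤ L₃ * |x k| ^ 3 :=
      tErr_bound hf k (fun y => hL3 y k k k) _ _
    have hT2 : ‖tErr f k (Yv x z k) (z k)‖ ≤ L₃ * |z k| ^ 3 :=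
      tErr_bound hf k (fun y => hL3 y k k k) _ _
    have hUY : (fun i => if i ∈ B k then 0 else Yv x z k i) = Uv x z B k := by
      funext i
      by_cases hi : i ∈ B k
      · have : i < k := hB k i hi
        simp [Uv, hi, this]
      · simp only [hi, if_false]
        by_cases h2 : i < k
        · simp [Yv, Uv, h2, hi]
        · simp [Yv, Uv, h2]
    have hzc : ‖pd (pd f k) k (Uv x z B k) - pd (pd f k) k (Yv x z k)‖ ≤
        L₃ * ∑ u ∈ B k, |Yv x z k u| := by
      have := zero_coords (hD2 k) (fun y u => hL3 y u k k) hL0 (Yv x z k) (B k)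
      rwa [hUY] at this
    have hsum : ∑ u ∈ B k, |Yv x z k u| = ∑ u ∈ B k, |x u| := by
      refine Finset.sum_congr rfl fun u hu => ?_
      have : u < k := hB k u hu
      simp [Yv, this]
    have hDiff : ‖pd (pd f k) k (Yv x z k) - pd (pd f k) k (Uv x z B k)‖ ≤
        L₃ * ∑ u ∈ B k, |x u| := by
      rw [norm_sub_rev]; rw [hsum] at hzc; exact hzc
    have hcoef : |((x k) ^ 2 - (z k) ^ 2) / 2| ≤ (x k) ^ 2 + (z k) ^ 2 := by
      rcases abs_cases (((x k) ^ 2 - (z k) ^ 2) / 2) with ⟨h, _⟩ | ⟨h, _⟩ <;>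
        nlinarith [sq_nonneg (x k), sq_nonneg (z k)]
    calc ‖(((x k) ^ 2 - (z k) ^ 2) / 2) •
          (pd (pd f k) k (Yv x z k) - pd (pd f k) k (Uv x z B k)) +
        (tErr f k (Yv x z k) (x k) - tErr f k (Yv x z k) (z k))‖
        ≤ ‖(((x k) ^ 2 - (z k) ^ 2) / 2) •
            (pd (pd f k) k (Yv x z k) - pd (pd f k) k (Uv x z B k))‖ +
          (‖tErr f k (Yv x z k) (x k)‖ + ‖tErr f k (Yv x z k) (z k)‖) :=
          le_trans (norm_add_le _ _) (by gcongr; exact norm_sub_le _ _)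
      _ ≤ ((x k) ^ 2 + (z k) ^ 2) * (L₃ * ∑ u ∈ B k, |x u|) +
          (L₃ * |x k| ^ 3 + L₃ * |z k| ^ 3) := by
          refine add_le_add ?_ (add_le_add hT1 hT2)
          rw [norm_smul, Real.norm_eq_abs]
          exact mul_le_mul hcoef hDiff (norm_nonneg _) (by positivity)
  calc ‖∑ k : Fin m, ((((x k) ^ 2 - (z k) ^ 2) / 2) •
          (pd (pd f k) k (Yv x z k) - pd (pd f k) k (Uv x z B k)) +
        (tErr f k (Yv x z k) (x k) - tErr f k (Yv x z k) (z k)))‖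
      ≤ ∑ k : Fin m, ‖(((x k) ^ 2 - (z k) ^ 2) / 2) •
          (pd (pd f k) k (Yv x z k) - pd (pd f k) k (Uv x z B k)) +
        (tErr f k (Yv x z k) (x k) - tErr f k (Yv x z k) (z k))‖ := norm_sum_le _ _
    _ ≤ ∑ k : Fin m, (((x k) ^ 2 + (z k) ^ 2) * (L₃ * ∑ u ∈ B k, |x u|) +
        (L₃ * |x k| ^ 3 + L₃ * |z k| ^ 3)) := Finset.sum_le_sum fun k _ => keybound k
    _ = L₃ * ∑ k : Fin m, ((x k) ^ 2 + (z k) ^ 2) * (∑ u ∈ B k, |x u|) +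
        L₃ * ∑ k : Fin m, |x k| ^ 3 + L₃ * ∑ k : Fin m, |z k| ^ 3 := by
        rw [Finset.sum_add_distrib, Finset.sum_add_distrib, Finset.mul_sum, Finset.mul_sum,
          Finset.mul_sum]
        rw [add_assoc]
        congr 1
        exact Finset.sum_congr rfl fun k _ => by ring


end RMT
end
end

section
/- Let k_n = n(n+1)/2, let x = (x_{ij})_{1≤j≤i≤n} and y = (y_{ij})_{1≤j≤i≤n} be two elements of ℝ^{k_n}, and let z = u + iv ∈ ℂ⁺ with v > 0. Let s(·) = s(·, z) be the map from ℝ^{k_n} to ℂ defined by s(x) = n^{−1} Tr((A_n(x) − z I_n)^{−1}), where A_n(x) is the symmetric n×n matrix with (A_n(x))_{ij} = n^{−1/2} x_{ij} for 1 ≤ j ≤ i ≤ n and (A_n(x))_{ij} = n^{−1/2} x_{ji} for i < j. Then |s(x) − s(y)| ≤ v^{−2} ( n^{−2} [ Σ_{i=1}^n (x_{ii} − y_{ii})² + 2 Σ_{1≤j<i≤n} (x_{ij} − y_{ij})² ] )^{1/2}. -/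
open MeasureTheory ProbabilityTheory Filter Matrix
open scoped NNReal ENNReal

noncomputable section

namespace RMT

variable {Ω : Type*} [MeasurableSpace Ω]

private lemma conj_mul_self_eq (a : ℂ) : (starRingEnd ℂ) a * a = ((‖a‖^2 : ℝ) : ℂ) := by
  rw [mul_comm, Complex.mul_conj]
  norm_cast
  simp [Complex.normSq_eq_norm_sq]

private lemma herm_quad_im {n : ℕ} {A : Matrix (Fin n) (Fin n) ℂ} (hA : A.IsHermitian)
    (w : Fin n → ℂ) : (∑ i, (starRingEnd ℂ) (w i) * (A *ᵥ w) i).im = 0 := by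
  rw [← Complex.conj_eq_iff_im]
  have hS : (∑ i, (starRingEnd ℂ) (w i) * (A *ᵥ w) i)
      = ∑ i, ∑ j, (starRingEnd ℂ) (w i) * (A i j * w j) := by
    simp [Matrix.mulVec, dotProduct, Finset.mul_sum]
  rw [hS, map_sum]
  simp_rw [map_sum, _root_.map_mul, Complex.conj_conj]
  rw [Finset.sum_comm]
  refine Finset.sum_congr rfl fun i _ => Finset.sum_congr rfl fun j _ => ?_
  have : (starRingEnd ℂ) (A j i) = A i j := by
    rw [← hA.apply i j]
    simp [Matrix.conjTranspose_apply]
  rw [this]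
  ring

private lemma coercive {n : ℕ} {A : Matrix (Fin n) (Fin n) ℂ} (hA : A.IsHermitian) (z : ℂ)
    (w : Fin n → ℂ) :
    (z.im * ∑ i, ‖w i‖ ^ 2) ^ 2 ≤
      (∑ i, ‖w i‖ ^ 2) * ∑ i, ‖((A - z • (1 : Matrix (Fin n) (Fin n) ℂ)) *ᵥ w) i‖ ^ 2 := by
  set M := A - z • (1 : Matrix (Fin n) (Fin n) ℂ) with hM
  set T : ℝ := ∑ i, ‖w i‖ ^ 2 with hT
  set S : ℂ := ∑ i, (starRingEnd ℂ) (w i) * (M *ᵥ w) i with hSdef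
  have hmv : M *ᵥ w = A *ᵥ w - z • w := by
    simp [hM, Matrix.sub_mulVec, Matrix.smul_mulVec, Matrix.one_mulVec]
  have hsplit : S = (∑ i, (starRingEnd ℂ) (w i) * (A *ᵥ w) i) - z * (T : ℂ) := by
    rw [hSdef, hmv]
    simp only [Pi.sub_apply, Pi.smul_apply, smul_eq_mul, mul_sub]
    rw [Finset.sum_sub_distrib]
    congr 1
    calc ∑ i, (starRingEnd ℂ) (w i) * (z * w i)
        = ∑ i, z * ((‖w i‖^2 : ℝ) : ℂ) := by
          refine Finset.sum_congr rfl fun i _ => ?_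
          rw [show (starRingEnd ℂ) (w i) * (z * w i)
              = z * ((starRingEnd ℂ) (w i) * w i) by ring, conj_mul_self_eq]
      _ = z * (T : ℂ) := by rw [← Finset.mul_sum, hT]; push_cast; ring
  have hSim : S.im = -(z.im * T) := by
    rw [hsplit]
    simp [herm_quad_im hA w, Complex.mul_im]
  have habs : ‖S‖ ≤ ∑ i, ‖w i‖ * ‖(M *ᵥ w) i‖ := by
    refine (norm_sum_le _ _).trans (Finset.sum_le_sum fun i _ => ?_)
    rw [norm_mul, RCLike.norm_conj]
  have hCS : (∑ i, ‖w i‖ * ‖(M *ᵥ w) i‖) ^ 2 ≤ T * ∑ i, ‖(M *ᵥ w) i‖ ^ 2 := by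
    rw [hT]
    exact Finset.sum_mul_sq_le_sq_mul_sq _ _ _
  have h1 : (z.im * T) ^ 2 ≤ ‖S‖ ^ 2 := by
    have h2 : S.im ^ 2 ≤ ‖S‖ ^ 2 := by
      have h5 := Complex.abs_im_le_norm S
      calc S.im ^ 2 = |S.im| ^ 2 := (sq_abs _).symm
        _ ≤ ‖S‖ ^ 2 := by gcongr
    calc (z.im * T) ^ 2 = S.im ^ 2 := by rw [hSim]; ring
      _ ≤ ‖S‖ ^ 2 := h2
  have h3 : ‖S‖ ^ 2 ≤ (∑ i, ‖w i‖ * ‖(M *ᵥ w) i‖) ^ 2 := by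
    have hnn : (0:ℝ) ≤ ∑ i, ‖w i‖ * ‖(M *ᵥ w) i‖ :=
      Finset.sum_nonneg fun i _ => mul_nonneg (norm_nonneg _) (norm_nonneg _)
    exact pow_le_pow_left₀ (norm_nonneg _) habs 2
  linarith

private lemma resolvent_isUnit {n : ℕ} {A : Matrix (Fin n) (Fin n) ℂ} (hA : A.IsHermitian)
    {z : ℂ} (hz : z.im ≠ 0) :
    IsUnit (A - z • (1 : Matrix (Fin n) (Fin n) ℂ)).det := by
  rw [← Matrix.isUnit_iff_isUnit_det, ← Matrix.mulVec_injective_iff_isUnit]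
  intro a b hab
  set M := A - z • (1 : Matrix (Fin n) (Fin n) ℂ) with hM
  have h0 : M *ᵥ (a - b) = 0 := by
    rw [Matrix.mulVec_sub, hab, sub_self]
  have hco := coercive hA z (a - b)
  rw [h0] at hco
  simp only [Pi.zero_apply, norm_zero, ne_eq, OfNat.ofNat_ne_zero, not_false_eq_true,
    zero_pow, Finset.sum_const_zero, mul_zero] at hco
  have hnn : (0:ℝ) ≤ ∑ i, ‖(a - b) i‖ ^ 2 :=
    Finset.sum_nonneg fun i _ => sq_nonneg _
  have himT : z.im * ∑ i, ‖(a - b) i‖ ^ 2 = 0 := by nlinarith [sq_nonneg (z.im * ∑ i, ‖(a - b) i‖ ^ 2)]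
  have hT0 : ∑ i, ‖(a - b) i‖ ^ 2 = 0 := by
    rcases mul_eq_zero.1 himT with h | h
    · exact absurd h hz
    · exact h
  have : ∀ i ∈ Finset.univ, ‖(a - b) i‖ ^ 2 = 0 :=
    (Finset.sum_eq_zero_iff_of_nonneg fun i _ => sq_nonneg _).1 hT0
  have hab0 : a - b = 0 := by
    funext i
    have h6 := this i (Finset.mem_univ i)
    have h7 : ‖(a - b) i‖ = 0 := by
      have := norm_nonneg ((a - b) i); nlinarith
    simp only [Pi.zero_apply]
    exact norm_eq_zero.1 h7
  exact sub_eq_zero.1 hab0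

private lemma resolvent_bound {n : ℕ} {A : Matrix (Fin n) (Fin n) ℂ} (hA : A.IsHermitian)
    {z : ℂ} (hz : 0 < z.im) (w : Fin n → ℂ) :
    ∑ i, ‖((A - z • (1 : Matrix (Fin n) (Fin n) ℂ))⁻¹ *ᵥ w) i‖ ^ 2 ≤
      (z.im ^ 2)⁻¹ * ∑ i, ‖w i‖ ^ 2 := by
  set M := A - z • (1 : Matrix (Fin n) (Fin n) ℂ) with hM
  have hdet : IsUnit M.det := resolvent_isUnit hA (ne_of_gt hz)
  set u := M⁻¹ *ᵥ w with hu
  have hMu : M *ᵥ u = w := by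
    rw [hu, Matrix.mulVec_mulVec, Matrix.mul_nonsing_inv _ hdet, Matrix.one_mulVec]
  have hco := coercive hA z u
  rw [hMu] at hco
  set Tu : ℝ := ∑ i, ‖u i‖ ^ 2 with hTu
  have hTunn : 0 ≤ Tu := Finset.sum_nonneg fun i _ => sq_nonneg _
  have hWnn : (0:ℝ) ≤ ∑ i, ‖w i‖ ^ 2 := Finset.sum_nonneg fun i _ => sq_nonneg _
  rcases eq_or_lt_of_le hTunn with h | h
  · rw [← h]
    exact mul_nonneg (by positivity) hWnn
  · have h4 : z.im ^ 2 * Tu ≤ ∑ i, ‖w i‖ ^ 2 := by nlinarith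
    have hpos : (0:ℝ) < z.im ^ 2 := by positivity
    calc Tu = (z.im ^ 2)⁻¹ * (z.im ^ 2 * Tu) := by field_simp
      _ ≤ (z.im ^ 2)⁻¹ * ∑ i, ‖w i‖ ^ 2 := by
          exact mul_le_mul_of_nonneg_left h4 (by positivity)

private lemma sum_sq_decomp (n : ℕ) (g : ℕ → ℕ → ℝ) :
    ∑ i ∈ Finset.range n, ∑ j ∈ Finset.range n, g i j =
      (∑ i ∈ Finset.range n, g i i) +
        ∑ i ∈ Finset.range n, ∑ j ∈ Finset.range i, (g i j + g j i) := by
  induction n with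
  | zero => simp
  | succ m ih =>
    simp only [Finset.sum_range_succ, Finset.sum_add_distrib, ih]
    ring


private lemma sqrt_single_sum {n : ℕ} (i : Fin n) :
    ∑ j, ‖(Pi.single i 1 : Fin n → ℂ) j‖ ^ 2 = 1 := by
  rw [Finset.sum_eq_single i]
  · simp
  · intro b _ hb; simp [Pi.single_apply, hb]
  · intro h; exact absurd (Finset.mem_univ i) h

set_option maxHeartbeats 1000000 in
private lemma trace_resolvent_diff {n : ℕ} {A B : Matrix (Fin n) (Fin n) ℂ}
    (hA : A.IsHermitian) (hB : B.IsHermitian) {z : ℂ} (hz : 0 < z.im) :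
    ‖Matrix.trace (A - z • (1 : Matrix (Fin n) (Fin n) ℂ))⁻¹ -
        Matrix.trace (B - z • (1 : Matrix (Fin n) (Fin n) ℂ))⁻¹‖ ≤
      Real.sqrt (∑ i, ∑ j, ‖B i j - A i j‖ ^ 2) * (Real.sqrt n * (z.im ^ 2)⁻¹) := by
  set M := A - z • (1 : Matrix (Fin n) (Fin n) ℂ) with hM
  set N := B - z • (1 : Matrix (Fin n) (Fin n) ℂ) with hN
  have hMdet : IsUnit M.det := resolvent_isUnit hA (ne_of_gt hz)
  have hNdet : IsUnit N.det := resolvent_isUnit hB (ne_of_gt hz)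
  have hC : N - M = B - A := by rw [hM, hN]; abel
  have hkey : M⁻¹ - N⁻¹ = M⁻¹ * (B - A) * N⁻¹ := by
    have h1 : M⁻¹ * M = 1 := Matrix.nonsing_inv_mul _ hMdet
    have h2 : N * N⁻¹ = 1 := Matrix.mul_nonsing_inv _ hNdet
    calc M⁻¹ - N⁻¹ = M⁻¹ * (N * N⁻¹) - (M⁻¹ * M) * N⁻¹ := by rw [h1, h2, mul_one, one_mul]
      _ = M⁻¹ * (N - M) * N⁻¹ := by noncomm_ring
      _ = M⁻¹ * (B - A) * N⁻¹ := by rw [hC]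
  have htr : Matrix.trace M⁻¹ - Matrix.trace N⁻¹ =
      Matrix.trace ((B - A) * (N⁻¹ * M⁻¹)) := by
    rw [← Matrix.trace_sub, hkey, Matrix.trace_mul_cycle, Matrix.trace_mul_comm]
  rw [htr]
  have htr2 : Matrix.trace ((B - A) * (N⁻¹ * M⁻¹)) =
      ∑ i, ∑ j, (B i j - A i j) * (N⁻¹ * M⁻¹) j i := by
    simp [Matrix.trace, Matrix.mul_apply, Matrix.diag, Matrix.sub_apply]
  have h1 : ‖Matrix.trace ((B - A) * (N⁻¹ * M⁻¹))‖ ≤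
      ∑ i, ∑ j, ‖B i j - A i j‖ * ‖(N⁻¹ * M⁻¹) j i‖ := by
    rw [htr2]
    refine (norm_sum_le _ _).trans (Finset.sum_le_sum fun i _ => ?_)
    refine (norm_sum_le _ _).trans (Finset.sum_le_sum fun j _ => ?_)
    rw [norm_mul]
  -- Cauchy-Schwarz
  set Sc : ℝ := ∑ i, ∑ j, ‖B i j - A i j‖ ^ 2 with hSc
  set Sr : ℝ := ∑ i, ∑ j, ‖(N⁻¹ * M⁻¹) j i‖ ^ 2 with hSr
  have hScnn : 0 ≤ Sc := Finset.sum_nonneg fun i _ => Finset.sum_nonneg fun j _ => sq_nonneg _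
  have hSrnn : 0 ≤ Sr := Finset.sum_nonneg fun i _ => Finset.sum_nonneg fun j _ => sq_nonneg _
  have hCS : (∑ i, ∑ j, ‖B i j - A i j‖ * ‖(N⁻¹ * M⁻¹) j i‖) ≤
      Real.sqrt Sc * Real.sqrt Sr := by
    have h := Finset.sum_mul_sq_le_sq_mul_sq (Finset.univ : Finset (Fin n × Fin n))
      (fun p : Fin n × Fin n => ‖B p.1 p.2 - A p.1 p.2‖)
      (fun p : Fin n × Fin n => ‖(N⁻¹ * M⁻¹) p.2 p.1‖)
    simp only [Fintype.sum_prod_type] at h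
    have hnn : (0:ℝ) ≤ ∑ i, ∑ j, ‖B i j - A i j‖ * ‖(N⁻¹ * M⁻¹) j i‖ :=
      Finset.sum_nonneg fun i _ => Finset.sum_nonneg fun j _ =>
        mul_nonneg (norm_nonneg _) (norm_nonneg _)
    have h2 := Real.sqrt_le_sqrt h
    rw [Real.sqrt_sq hnn, Real.sqrt_mul (by exact hScnn)] at h2
    exact h2
  -- column bound
  have hcol : ∀ i : Fin n, (∑ j, ‖(N⁻¹ * M⁻¹) j i‖ ^ 2) ≤ (z.im ^ 2)⁻¹ * (z.im ^ 2)⁻¹ := by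
    intro i
    have e1 : ∀ j, (N⁻¹ * M⁻¹) j i = (N⁻¹ *ᵥ (M⁻¹ *ᵥ Pi.single i 1)) j := by
      intro j
      rw [Matrix.mulVec_mulVec, Matrix.mulVec_single]
      simp
    calc ∑ j, ‖(N⁻¹ * M⁻¹) j i‖ ^ 2
        = ∑ j, ‖(N⁻¹ *ᵥ (M⁻¹ *ᵥ Pi.single i 1)) j‖ ^ 2 :=
          Finset.sum_congr rfl fun j _ => by rw [e1 j]
      _ ≤ (z.im ^ 2)⁻¹ * ∑ j, ‖(M⁻¹ *ᵥ (Pi.single i 1 : Fin n → ℂ)) j‖ ^ 2 := by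
          rw [hN]; exact resolvent_bound hB hz _
      _ ≤ (z.im ^ 2)⁻¹ * ((z.im ^ 2)⁻¹ * ∑ j, ‖(Pi.single i 1 : Fin n → ℂ) j‖ ^ 2) := by
          refine mul_le_mul_of_nonneg_left ?_ (by positivity)
          rw [hM]; exact resolvent_bound hA hz _
      _ = (z.im ^ 2)⁻¹ * (z.im ^ 2)⁻¹ := by rw [sqrt_single_sum i, mul_one]
  have hSrle : Sr ≤ n * ((z.im ^ 2)⁻¹ * (z.im ^ 2)⁻¹) := by
    rw [hSr]
    calc ∑ i, ∑ j, ‖(N⁻¹ * M⁻¹) j i‖ ^ 2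
        ≤ ∑ _i : Fin n, (z.im ^ 2)⁻¹ * (z.im ^ 2)⁻¹ :=
          Finset.sum_le_sum fun i _ => hcol i
      _ = n * ((z.im ^ 2)⁻¹ * (z.im ^ 2)⁻¹) := by
          rw [Finset.sum_const, Finset.card_univ, Fintype.card_fin, nsmul_eq_mul]
  calc ‖Matrix.trace ((B - A) * (N⁻¹ * M⁻¹))‖
      ≤ Real.sqrt Sc * Real.sqrt Sr := h1.trans hCS
    _ ≤ Real.sqrt Sc * Real.sqrt (n * ((z.im ^ 2)⁻¹ * (z.im ^ 2)⁻¹)) := by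
        exact mul_le_mul_of_nonneg_left (Real.sqrt_le_sqrt hSrle) (Real.sqrt_nonneg _)
    _ = Real.sqrt Sc * (Real.sqrt n * (z.im ^ 2)⁻¹) := by
        rw [Real.sqrt_mul (by positivity)]
        congr 1
        rw [show ((z.im ^ 2)⁻¹ * (z.im ^ 2)⁻¹ : ℝ) = ((z.im ^ 2)⁻¹) ^ 2 by ring]
        exact congrArg _ (Real.sqrt_sq (by positivity))


private def dfun (x y : ℕ × ℕ → ℝ) (a b : ℕ) : ℝ :=
  if b ≤ a then (x (a+1, b+1) - y (a+1, b+1))^2 else (x (b+1, a+1) - y (b+1, a+1))^2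

private lemma dfun_symm (x y : ℕ × ℕ → ℝ) (a b : ℕ) : dfun x y b a = dfun x y a b := by
  unfold dfun
  rcases Nat.lt_trichotomy a b with h | h | h
  · rw [if_pos h.le, if_neg (by omega)]
  · subst h; rfl
  · rw [if_neg (by omega), if_pos h.le]

private lemma scaled_herm (n : ℕ) (x : ℕ × ℕ → ℝ) :
    ((scaledMat n x).map (fun t => (t : ℂ))).IsHermitian := by
  have hsym : ∀ i j : Fin n, scaledMat n x j i = scaledMat n x i j := by
    intro i j
    simp only [scaledMat, symMat, Matrix.smul_apply, Matrix.of_apply, smul_eq_mul]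
    congr 1
    split_ifs with h1 h2 h2
    · have h3 : (i : ℕ) = (j : ℕ) := le_antisymm h1 h2
      rw [h3]
    · rfl
    · rfl
    · omega
  ext i j
  simp only [Matrix.conjTranspose_apply, Matrix.map_apply, RCLike.star_def, Complex.conj_ofReal]
  rw [hsym i j]

/-- Lemma (Lipschitz property of the Stieltjes transform in the matrix entries): for
`z = u + iv` with `v > 0`,
`|s(x) - s(y)| ≤ v⁻² (n⁻² [Σᵢ (x_{ii} - y_{ii})² + 2 Σ_{j<i} (x_{ij} - y_{ij})²])^{1/2}`. -/
theorem stieltjes_transform_lipschitz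
    (n : ℕ) (x y : ℕ × ℕ → ℝ) (z : ℂ) (hz : 0 < z.im) :
    ‖stMat (scaledMat n x) z - stMat (scaledMat n y) z‖ ≤
      (z.im ^ 2)⁻¹ * Real.sqrt (((n : ℝ) ^ 2)⁻¹ *
        ((∑ i ∈ Finset.Icc 1 n, (x (i, i) - y (i, i)) ^ 2) +
          2 * ∑ i ∈ Finset.Icc 1 n, ∑ j ∈ Finset.Icc 1 (i - 1), (x (i, j) - y (i, j)) ^ 2)) := by
  rcases Nat.eq_zero_or_pos n with hn | hn
  · subst hn
    have h0 : stMat (scaledMat 0 x) z = 0 := by simp [stMat]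
    have h0' : stMat (scaledMat 0 y) z = 0 := by simp [stMat]
    rw [h0, h0', sub_self, norm_zero]
    positivity
  · have hnR : (0:ℝ) < (n : ℝ) := by exact_mod_cast hn
    have hA : ((scaledMat n x).map (fun t => (t : ℂ))).IsHermitian := scaled_herm n x
    have hB : ((scaledMat n y).map (fun t => (t : ℂ))).IsHermitian := scaled_herm n y
    have hmain := trace_resolvent_diff hA hB hz
    set S1 : ℝ := ∑ i ∈ Finset.Icc 1 n, (x (i, i) - y (i, i)) ^ 2 with hS1
    set S2 : ℝ := ∑ i ∈ Finset.Icc 1 n, ∑ j ∈ Finset.Icc 1 (i - 1), (x (i, j) - y (i, j)) ^ 2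
      with hS2
    -- entrywise computation of Sc
    have hentry : ∀ i j : Fin n,
        ‖(scaledMat n y).map (fun t => (t : ℂ)) i j -
          (scaledMat n x).map (fun t => (t : ℂ)) i j‖ ^ 2
          = (n : ℝ)⁻¹ * dfun x y (i : ℕ) (j : ℕ) := by
      intro i j
      simp only [Matrix.map_apply, scaledMat, symMat, Matrix.smul_apply, Matrix.of_apply,
        smul_eq_mul]
      rw [← Complex.ofReal_sub, Complex.norm_real, Real.norm_eq_abs, sq_abs]
      have hsq : ((Real.sqrt n)⁻¹) ^ 2 = (n : ℝ)⁻¹ := by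
        rw [inv_pow, Real.sq_sqrt (Nat.cast_nonneg n)]
      unfold dfun
      split_ifs with h
      · rw [← mul_sub, mul_pow, hsq]; ring
      · rw [← mul_sub, mul_pow, hsq]; ring
    have hSc : (∑ i : Fin n, ∑ j : Fin n,
        ‖(scaledMat n y).map (fun t => (t : ℂ)) i j -
          (scaledMat n x).map (fun t => (t : ℂ)) i j‖ ^ 2)
        = (n : ℝ)⁻¹ * (S1 + 2 * S2) := by
      have e0 : (∑ i : Fin n, ∑ j : Fin n,
          ‖(scaledMat n y).map (fun t => (t : ℂ)) i j -
            (scaledMat n x).map (fun t => (t : ℂ)) i j‖ ^ 2)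
          = (n : ℝ)⁻¹ * ∑ i : Fin n, ∑ j : Fin n, dfun x y (i : ℕ) (j : ℕ) := by
        simp_rw [hentry]
        rw [Finset.mul_sum]
        exact Finset.sum_congr rfl fun i _ => by rw [Finset.mul_sum]
      have e1 : (∑ i : Fin n, ∑ j : Fin n, dfun x y (i : ℕ) (j : ℕ))
          = ∑ i ∈ Finset.range n, ∑ j ∈ Finset.range n, dfun x y i j := by
        calc ∑ i : Fin n, ∑ j : Fin n, dfun x y (i : ℕ) (j : ℕ)
            = ∑ i : Fin n, ∑ j ∈ Finset.range n, dfun x y (i : ℕ) j :=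
              Finset.sum_congr rfl fun i _ => Fin.sum_univ_eq_sum_range _ n
          _ = ∑ i ∈ Finset.range n, ∑ j ∈ Finset.range n, dfun x y i j :=
              Fin.sum_univ_eq_sum_range (fun a => ∑ j ∈ Finset.range n, dfun x y a j) n
      have e2 : (∑ i ∈ Finset.range n, ∑ j ∈ Finset.range n, dfun x y i j)
          = (∑ i ∈ Finset.range n, dfun x y i i) +
            ∑ i ∈ Finset.range n, ∑ j ∈ Finset.range i, (dfun x y i j + dfun x y j i) :=
        sum_sq_decomp n (dfun x y)
      have e3 : (∑ i ∈ Finset.range n, ∑ j ∈ Finset.range i, (dfun x y i j + dfun x y j i))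
          = 2 * ∑ i ∈ Finset.range n, ∑ j ∈ Finset.range i, dfun x y i j := by
        rw [Finset.mul_sum]
        refine Finset.sum_congr rfl fun i _ => ?_
        rw [Finset.mul_sum]
        refine Finset.sum_congr rfl fun j _ => ?_
        rw [dfun_symm]; ring
      have ediag : S1 = ∑ i ∈ Finset.range n, dfun x y i i := by
        rw [hS1, ← Finset.Ico_add_one_right_eq_Icc, Finset.sum_Ico_eq_sum_range]
        refine Finset.sum_congr (by norm_num) fun i _ => ?_
        unfold dfun
        rw [if_pos (le_refl i), Nat.one_add]
      have eoff : S2 = ∑ i ∈ Finset.range n, ∑ j ∈ Finset.range i, dfun x y i j := by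
        rw [hS2, ← Finset.Ico_add_one_right_eq_Icc, Finset.sum_Ico_eq_sum_range]
        refine Finset.sum_congr (by norm_num) fun i _ => ?_
        rw [show 1 + i - 1 = i from by omega, ← Finset.Ico_add_one_right_eq_Icc, Finset.sum_Ico_eq_sum_range]
        refine Finset.sum_congr (by norm_num) fun j hj => ?_
        rw [Finset.mem_range] at hj
        unfold dfun
        rw [if_pos hj.le, Nat.one_add, Nat.one_add]
      rw [e0, e1, e2, e3, ediag, eoff]
    -- assemble
    have hfactor : stMat (scaledMat n x) z - stMat (scaledMat n y) z
        = (n : ℂ)⁻¹ *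
          (Matrix.trace ((scaledMat n x).map (fun t => (t : ℂ)) -
              z • (1 : Matrix (Fin n) (Fin n) ℂ))⁻¹ -
            Matrix.trace ((scaledMat n y).map (fun t => (t : ℂ)) -
              z • (1 : Matrix (Fin n) (Fin n) ℂ))⁻¹) := by
      simp only [stMat]; ring
    rw [hfactor, norm_mul, norm_inv, Complex.norm_natCast]
    have step1 : (n : ℝ)⁻¹ *
        ‖Matrix.trace ((scaledMat n x).map (fun t => (t : ℂ)) -
            z • (1 : Matrix (Fin n) (Fin n) ℂ))⁻¹ -
          Matrix.trace ((scaledMat n y).map (fun t => (t : ℂ)) -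
            z • (1 : Matrix (Fin n) (Fin n) ℂ))⁻¹‖
        ≤ (n : ℝ)⁻¹ * (Real.sqrt ((n : ℝ)⁻¹ * (S1 + 2 * S2)) *
            (Real.sqrt n * (z.im ^ 2)⁻¹)) := by
      refine mul_le_mul_of_nonneg_left ?_ (by positivity)
      rw [← hSc]
      exact hmain
    refine step1.trans (le_of_eq ?_)
    have hStot : (0:ℝ) ≤ S1 + 2 * S2 := by
      have h1 : (0:ℝ) ≤ S1 := Finset.sum_nonneg fun i _ => sq_nonneg _
      have h2 : (0:ℝ) ≤ S2 := Finset.sum_nonneg fun i _ =>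
        Finset.sum_nonneg fun j _ => sq_nonneg _
      linarith
    rw [Real.sqrt_mul (by positivity) (S1 + 2 * S2),
      Real.sqrt_mul (by positivity) (S1 + 2 * S2), Real.sqrt_inv, Real.sqrt_inv,
      Real.sqrt_sq hnR.le]
    have hsn : Real.sqrt (n : ℝ) ≠ 0 := ne_of_gt (Real.sqrt_pos.2 hnR)
    have hcanc : (Real.sqrt (n : ℝ))⁻¹ * Real.sqrt (n : ℝ) = 1 := inv_mul_cancel₀ hsn
    linear_combination ((z.im ^ 2)⁻¹ * (n : ℝ)⁻¹ * Real.sqrt (S1 + 2 * S2)) * hcanc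

end RMT
end
end
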